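/- arXiv:0801.0507 — 9 statements merged into one kernel-verified Lean document; each statement's English description precedes it below -/
import Mathlib

section
/- Let (D, [1]) be a triangulated category and let L →u M →v Y →z L[1] and L' →u' M' →v' Y' →z' L'[1] be two distinguished triangles such that Hom(L', Y) = Hom(L, Y') = Hom(L, Y'[-1]) = 0. Then every morphism g : M → M' extends uniquely to a morphism of triangles (f, g, h). -/
open CategoryTheory CategoryTheory.Limits CategoryTheory.Pretriangulated

theorem stmt_5 {D : Type*} [Category D] [Preadditive D] [HasZeroObject D]
    [HasShift D ℤ] [∀ n : ℤ, (shiftFunctor D n).Additive] [Pretriangulated D]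
    {L M Y L' M' Y' : D}
    (u : L ⟶ M) (v : M ⟶ Y) (z : Y ⟶ L⟦(1 : ℤ)⟧)
    (u' : L' ⟶ M') (v' : M' ⟶ Y') (z' : Y' ⟶ L'⟦(1 : ℤ)⟧)
    (hT : Triangle.mk u v z ∈ distTriang D)
    (hT' : Triangle.mk u' v' z' ∈ distTriang D)
    (h1 : ∀ φ : L' ⟶ Y, φ = 0)
    (h2 : ∀ φ : L ⟶ Y', φ = 0)
    (h3 : ∀ φ : L ⟶ Y'⟦(-1 : ℤ)⟧, φ = 0)
    (g : M ⟶ M') :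
    ∃! fh : (L ⟶ L') × (Y ⟶ Y'),
      fh.1 ≫ u' = u ≫ g ∧ v ≫ fh.2 = g ≫ v' ∧
        fh.2 ≫ z' = z ≫ (shiftFunctor D (1 : ℤ)).map fh.1 := by
  -- Existence of f
  obtain ⟨f, hf⟩ : ∃ f : L ⟶ L', u ≫ g = f ≫ u' := Triangle.coyoneda_exact₂ _ hT' (u ≫ g)
    (by exact h2 _)
  obtain ⟨h, hh₁, hh₂⟩ : ∃ h : Y ⟶ Y', v ≫ h = g ≫ v' ∧
      z ≫ (shiftFunctor D (1 : ℤ)).map f = h ≫ z' :=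
    Pretriangulated.complete_distinguished_triangle_morphism
      (Triangle.mk u v z) (Triangle.mk u' v' z') hT hT' f g hf
  refine ⟨(f, h), ⟨hf.symm, hh₁, hh₂.symm⟩, ?_⟩
  -- Uniqueness
  rintro ⟨f₂, h₂'⟩ ⟨c1, c2, c3⟩
  have hfeq : f₂ = f := by
    have : (f₂ - f) ≫ u' = 0 := by
      rw [Preadditive.sub_comp, c1, hf.symm, sub_self]
    obtain ⟨φ, hφ⟩ : ∃ φ : L ⟶ Y'⟦(-1 : ℤ)⟧, f₂ - f = φ ≫
        (Triangle.mk u' v' z').invRotate.mor₁ :=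
      Triangle.coyoneda_exact₂ _ (inv_rot_of_distTriang _ hT') (f₂ - f) this
    rw [h3 φ] at hφ; replace hφ := hφ.trans zero_comp
    exact sub_eq_zero.mp hφ
  have hheq : h₂' = h := by
    have : v ≫ (h₂' - h) = 0 := by
      rw [Preadditive.comp_sub, c2, hh₁, sub_self]
    obtain ⟨φ, hφ⟩ : ∃ φ : L⟦(1 : ℤ)⟧ ⟶ Y', h₂' - h = z ≫ φ :=
      Triangle.yoneda_exact₃ _ hT (h₂' - h) this
    have hφ0 : φ = 0 := by
      have := h3 ((shiftFunctorCompIsoId D (1 : ℤ) (-1 : ℤ) (by norm_num)).inv.app L ≫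
        (shiftFunctor D (-1 : ℤ)).map φ)
      have h4 : (shiftFunctor D (-1 : ℤ)).map φ = 0 := by
        rw [← cancel_epi ((shiftFunctorCompIsoId D (1 : ℤ) (-1 : ℤ)
          (by norm_num)).inv.app L)]
        simpa using this
      exact (shiftFunctor D (-1 : ℤ)).map_injective (by rw [h4, Functor.map_zero])
    rw [hφ0, comp_zero] at hφ
    exact sub_eq_zero.mp hφ
  simp [hfeq, hheq]
end

section
/- Let (X, Y, Z) be a triangulated TTF triple on a triangulated category D. Then the following are equivalent: (1) the t-structure (X, Y) splits (every torsion triangle splits, i.e., X τ_X M → M is a section for every M); (2) the t-structure (Y, Z) splits; (3) X = Z. -/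
open CategoryTheory CategoryTheory.Limits CategoryTheory.Pretriangulated

/-- A t-structure on a triangulated category, given by a pair of strictly full
subcategories `(X, Y)` with `Hom(X, Y) = 0`, `X` closed under `[1]`, `Y` closed
under `[-1]`, and every object sitting in a distinguished triangle with first
vertex in `X` and third vertex in `Y`. -/
def IsTStructureOn {D : Type*} [Category D] [Preadditive D] [HasZeroObject D]
    [HasShift D ℤ] [∀ n : ℤ, (shiftFunctor D n).Additive] [Pretriangulated D]
    (X Y : D → Prop) : Prop :=
  (∀ {A B : D}, (A ≅ B) → X A → X B) ∧
  (∀ {A B : D}, (A ≅ B) → Y A → Y B) ∧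
  (∀ {A B : D}, X A → Y B → ∀ f : A ⟶ B, f = 0) ∧
  (∀ {A : D}, X A → X (A⟦(1 : ℤ)⟧)) ∧
  (∀ {A : D}, Y A → Y (A⟦(-1 : ℤ)⟧)) ∧
  (∀ M : D, ∃ (A B : D) (f : A ⟶ M) (g : M ⟶ B) (h : B ⟶ A⟦(1 : ℤ)⟧),
    X A ∧ Y B ∧ Triangle.mk f g h ∈ distTriang D)

/-- The t-structure `(X, Y)` splits: for each object `M` the torsion triangle
`A → M → B → A[1]` (with `A ∈ X`, `B ∈ Y`) splits; equivalently its first map is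
a section. -/
def TStructureSplits {D : Type*} [Category D] [Preadditive D] [HasZeroObject D]
    [HasShift D ℤ] [∀ n : ℤ, (shiftFunctor D n).Additive] [Pretriangulated D]
    (X Y : D → Prop) : Prop :=
  ∀ M : D, ∃ (A B : D) (f : A ⟶ M) (g : M ⟶ B) (h : B ⟶ A⟦(1 : ℤ)⟧),
    X A ∧ Y B ∧ (Triangle.mk f g h ∈ distTriang D) ∧ ∃ r : M ⟶ A, f ≫ r = 𝟙 A

section Aux

variable {D : Type*} [Category D] [Preadditive D] [HasZeroObject D]
    [HasShift D ℤ] [∀ n : ℤ, (shiftFunctor D n).Additive] [Pretriangulated D]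

/-- If the third map of a distinguished triangle vanishes, the first map is a
split monomorphism. -/
lemma aux_section (T : Triangle D) (hT : T ∈ distTriang D) (hh : T.mor₃ = 0) :
    ∃ r : T.obj₂ ⟶ T.obj₁, T.mor₁ ≫ r = 𝟙 T.obj₁ := by
  obtain ⟨r, hr⟩ := Triangle.yoneda_exact₂ _ (inv_rot_of_distTriang _ hT) (𝟙 T.obj₁)
    (by simp [Triangle.invRotate, hh]; exact Limits.zero_comp)
  exact ⟨r, hr.symm⟩

/-- If the third map of a distinguished triangle vanishes and all maps from the
third object to the second vanish, the first map is an isomorphism. -/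
lemma aux_isIso (T : Triangle D) (hT : T ∈ distTriang D) (hh : T.mor₃ = 0)
    (hzero : ∀ s : T.obj₃ ⟶ T.obj₂, s = 0) : IsIso T.mor₁ := by
  obtain ⟨r, hr⟩ := aux_section T hT hh
  obtain ⟨s, hs⟩ := Triangle.yoneda_exact₂ _ hT (𝟙 T.obj₂ - r ≫ T.mor₁)
    (by rw [Preadditive.comp_sub, Category.comp_id, ← Category.assoc, hr,
      Category.id_comp, sub_self])
  have h0 : 𝟙 T.obj₂ - r ≫ T.mor₁ = 0 := by rw [hs, hzero s, Limits.comp_zero]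
  exact ⟨r, hr, (sub_eq_zero.mp h0).symm⟩

/-- In a split t-structure, the connecting map of any distinguished triangle
with first vertex in the aisle and third in the coaisle vanishes. -/
lemma aux_mor₃_eq_zero {U V : D → Prop} (hUV : IsTStructureOn U V)
    (hsp : TStructureSplits U V) (T : Triangle D) (hT : T ∈ distTriang D)
    (hA : U T.obj₁) (hB : V T.obj₃) : T.mor₃ = 0 := by
  obtain ⟨A₀, B₀, f₀, g₀, h₀, hA₀, hB₀, hT₀, r₀, hr₀⟩ := hsp T.obj₂
  obtain ⟨s₀, hs₀⟩ : ∃ s₀ : B₀ ⟶ T.obj₂, 𝟙 T.obj₂ - r₀ ≫ f₀ = g₀ ≫ s₀ := Triangle.yoneda_exact₂ _ hT₀ (𝟙 T.obj₂ - r₀ ≫ f₀)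
    (show f₀ ≫ (𝟙 T.obj₂ - r₀ ≫ f₀) = 0 by
      rw [Preadditive.comp_sub, Category.comp_id, ← Category.assoc, hr₀,
        Category.id_comp, sub_self])
  have hs₀' : 𝟙 T.obj₂ - r₀ ≫ f₀ = g₀ ≫ s₀ := hs₀
  obtain ⟨β, hβ⟩ := Triangle.yoneda_exact₂ _ hT g₀ (hUV.2.2.1 hA hB₀ _)
  have hf₀g : f₀ ≫ T.mor₂ = 0 := hUV.2.2.1 hA₀ hB _
  have key : T.mor₂ ≫ ((β ≫ s₀) ≫ T.mor₂ - 𝟙 T.obj₃) = 0 := by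
    have : (g₀ ≫ s₀) ≫ T.mor₂ = T.mor₂ := by
      rw [← hs₀', Preadditive.sub_comp, Category.id_comp, Category.assoc, hf₀g,
        Limits.comp_zero, sub_zero]
    rw [Preadditive.comp_sub, Category.comp_id, ← Category.assoc, ← Category.assoc,
      ← hβ, Category.assoc, ← Category.assoc, this, sub_self]
  obtain ⟨σ, hσ⟩ := Triangle.yoneda_exact₂ _ (rot_of_distTriang _ hT)
    ((β ≫ s₀) ≫ T.mor₂ - 𝟙 T.obj₃) key
  have hσ0 : σ = 0 := hUV.2.2.1 (hUV.2.2.2.1 hA) hB σ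
  have hsg : (β ≫ s₀) ≫ T.mor₂ = 𝟙 T.obj₃ := by
    have := hσ
    replace this := sub_eq_zero.mp (this.trans (by rw [hσ0]; exact Limits.comp_zero))
    exact this
  rw [← Category.id_comp T.mor₃, ← hsg, Category.assoc, Category.assoc,
    comp_distTriang_mor_zero₂₃ _ hT, Limits.comp_zero, Limits.comp_zero]

/-- In a split t-structure, all "connecting-shaped" maps from a coaisle object
to the shift of an aisle object vanish. -/
lemma aux_hom_vanish {U V : D → Prop} (hUV : IsTStructureOn U V)
    (hsp : TStructureSplits U V) {A B : D} (hA : U A) (hB : V B)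
    (t : B ⟶ A⟦(1 : ℤ)⟧) : t = 0 := by
  obtain ⟨N, a, b, hT⟩ := distinguished_cocone_triangle t
  have hT2 := inv_rot_of_distTriang _ (inv_rot_of_distTriang _ hT)
  have hobj : U ((Triangle.mk t a b).invRotate.invRotate.obj₁) :=
    hUV.1 ((shiftEquiv D (1 : ℤ)).unitIso.app A) hA
  have h0 := aux_mor₃_eq_zero hUV hsp _ hT2 hobj hB
  have h1 : t ≫ (shiftEquiv D (1 : ℤ)).counitIso.inv.app (A⟦(1 : ℤ)⟧) = 0 := h0
  have h2 := h1 =≫ ((shiftEquiv D (1 : ℤ)).counitIso.hom.app (A⟦(1 : ℤ)⟧))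
  rw [Category.assoc, Iso.inv_hom_id_app] at h2
  exact (Category.comp_id _).symm.trans (h2.trans Limits.zero_comp)

end Aux

theorem stmt_8 {D : Type*} [Category D] [Preadditive D] [HasZeroObject D]
    [HasShift D ℤ] [∀ n : ℤ, (shiftFunctor D n).Additive] [Pretriangulated D]
    (X Y Z : D → Prop)
    (hXY : IsTStructureOn X Y) (hYZ : IsTStructureOn Y Z) :
    (TStructureSplits X Y ↔ TStructureSplits Y Z) ∧
    (TStructureSplits X Y ↔ ∀ M : D, X M ↔ Z M) := by
  have PR : TStructureSplits X Y → ∀ M : D, X M ↔ Z M := by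
    intro hsp M
    constructor
    · intro hM
      obtain ⟨B, C, u, v, w, hB, hC, hT⟩ := hYZ.2.2.2.2.2 M
      have hTr := rot_of_distTriang _ hT
      have h3 : (Triangle.mk u v w).rotate.mor₃ = 0 :=
        aux_mor₃_eq_zero hXY hsp _ hTr hM (hYZ.2.2.2.1 hB)
      have hv : IsIso v :=
        aux_isIso _ hTr h3 (fun s => hYZ.2.2.1 (hYZ.2.2.2.1 hB) hC s)
      exact hYZ.2.1 (@asIso _ _ _ _ v hv).symm hC
    · intro hM
      obtain ⟨A, B, f, g, h, hA, hB, hT⟩ := hXY.2.2.2.2.2 M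
      have h3 : (Triangle.mk f g h).mor₃ = 0 := aux_mor₃_eq_zero hXY hsp _ hT hA hB
      have hf : IsIso f := aux_isIso _ hT h3 (fun s => hYZ.2.2.1 hB hM s)
      exact hXY.1 (@asIso _ _ _ _ f hf) hA
  have QR : TStructureSplits Y Z → ∀ M : D, X M ↔ Z M := by
    intro hsp M
    constructor
    · intro hM
      obtain ⟨B, C, u, v, w, hB, hC, hT⟩ := hYZ.2.2.2.2.2 M
      have hw : (Triangle.mk u v w).mor₃ = 0 := aux_mor₃_eq_zero hYZ hsp _ hT hB hC
      obtain ⟨r, hr⟩ := aux_section _ hT hw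
      have hr' : u ≫ r = 𝟙 B := hr
      have hr0 : r = 0 := hXY.2.2.1 hM hB r
      have hB0 : 𝟙 B = (0 : B ⟶ B) := by rw [← hr', hr0]; exact Limits.comp_zero
      have hu : u = 0 := by rw [← Category.id_comp u, hB0, Limits.zero_comp]
      have hTr := rot_of_distTriang _ hT
      have h3 : (Triangle.mk u v w).rotate.mor₃ = 0 := by
        simp [Triangle.rotate, hu]; exact neg_eq_zero.mpr (Functor.map_zero _ _ _)
      have hv : IsIso v :=
        aux_isIso _ hTr h3 (fun s => hYZ.2.2.1 (hYZ.2.2.2.1 hB) hC s)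
      exact hYZ.2.1 (@asIso _ _ _ _ v hv).symm hC
    · intro hM
      obtain ⟨A, B, f, g, h, hA, hB, hT⟩ := hXY.2.2.2.2.2 M
      have hg : g = 0 := by
        have h1 : (g ≫ (shiftEquiv D (1 : ℤ)).counitIso.inv.app B) = 0 :=
          aux_hom_vanish hYZ hsp (hXY.2.2.2.2.1 hB) hM
            (g ≫ (shiftEquiv D (1 : ℤ)).counitIso.inv.app B)
        have h2 := h1 =≫ ((shiftEquiv D (1 : ℤ)).counitIso.hom.app B)
        rw [Category.assoc, Iso.inv_hom_id_app] at h2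
        exact (Category.comp_id _).symm.trans (h2.trans Limits.zero_comp)
      have hTrr := rot_of_distTriang _ (rot_of_distTriang _ hT)
      have h3 : (Triangle.mk f g h).rotate.rotate.mor₃ = 0 := by
        simp [Triangle.rotate, hg]; exact neg_eq_zero.mpr (Functor.map_zero _ _ _)
      obtain ⟨ρ, hρ⟩ := aux_section _ hTrr h3
      have hρ' : h ≫ ρ = 𝟙 B := hρ
      have hρ0 : ρ = (0 : A⟦(1 : ℤ)⟧ ⟶ B) := hXY.2.2.1 (hXY.2.2.2.1 hA) hB ρ
      have hB0 : 𝟙 B = (0 : B ⟶ B) := by rw [← hρ', hρ0]; exact Limits.comp_zero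
      have hh : (Triangle.mk f g h).mor₃ = 0 := by
        show h = 0
        rw [← Category.id_comp h, hB0, Limits.zero_comp]
      have hf : IsIso f := aux_isIso _ hT hh
        (fun s => show s = 0 by
          have : 𝟙 B ≫ s = s := Category.id_comp s
          rw [← this, hB0]; exact Limits.zero_comp)
      exact hXY.1 (@asIso _ _ _ _ f hf) hA
  have RP : (∀ M : D, X M ↔ Z M) → TStructureSplits X Y := by
    intro hR M
    obtain ⟨A, B, f, g, h, hA, hB, hT⟩ := hXY.2.2.2.2.2 M
    have hh : (Triangle.mk f g h).mor₃ = 0 :=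
      hYZ.2.2.1 hB ((hR _).1 (hXY.2.2.2.1 hA)) h
    obtain ⟨r, hr⟩ := aux_section _ hT hh
    exact ⟨A, B, f, g, h, hA, hB, hT, r, hr⟩
  have RQ : (∀ M : D, X M ↔ Z M) → TStructureSplits Y Z := by
    intro hR M
    obtain ⟨B, C, u, v, w, hB, hC, hT⟩ := hYZ.2.2.2.2.2 M
    have hw : (Triangle.mk u v w).mor₃ = 0 :=
      hXY.2.2.1 ((hR _).2 hC) (hYZ.2.2.2.1 hB) w
    obtain ⟨r, hr⟩ := aux_section _ hT hw
    exact ⟨B, C, u, v, w, hB, hC, hT, r, hr⟩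
  have hPR : TStructureSplits X Y ↔ ∀ M : D, X M ↔ Z M := ⟨PR, RP⟩
  have hQR : TStructureSplits Y Z ↔ ∀ M : D, X M ↔ Z M := ⟨QR, RQ⟩
  exact ⟨hPR.trans hQR.symm, hPR⟩
end

section
/- Let D be a triangulated category and let (L_i →f_i M_i →g_i N_i →h_i L_i[1])_{i ∈ I} be a family of distinguished triangles. If the coproducts ∐ L_i and ∐ M_i exist in D, then the coproduct ∐ N_i exists and the induced sequence ∐L_i → ∐M_i → ∐N_i → ∐L_i[1] is a distinguished triangle. -/
open CategoryTheory CategoryTheory.Limits CategoryTheory.Pretriangulated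

universe w v u

theorem stmt_10 {D : Type u} [Category.{v} D] [Preadditive D] [HasZeroObject D]
    [HasShift D ℤ] [∀ n : ℤ, (shiftFunctor D n).Additive] [Pretriangulated D]
    {I : Type w} {L M N : I → D}
    (f : ∀ i, L i ⟶ M i) (g : ∀ i, M i ⟶ N i) (h : ∀ i, N i ⟶ (L i)⟦(1 : ℤ)⟧)
    (hT : ∀ i, Triangle.mk (f i) (g i) (h i) ∈ distTriang D)
    [HasCoproduct L] [HasCoproduct M] :
    HasCoproduct N ∧
      ∀ [HasCoproduct N],
        Triangle.mk (Limits.Sigma.map f) (Limits.Sigma.map g)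
            (Limits.Sigma.desc fun i => h i ≫ (shiftFunctor D (1 : ℤ)).map (Limits.Sigma.ι L i)) ∈
          distTriang D := by
  obtain ⟨Z, z₂, z₃, hZ⟩ := Pretriangulated.distinguished_cocone_triangle (Limits.Sigma.map f)
  obtain ⟨c, hc₁, hc₂⟩ : ∃ (c : ∀ i, N i ⟶ Z),
      (∀ i, g i ≫ c i = Sigma.ι M i ≫ z₂) ∧
      (∀ i, h i ≫ (shiftFunctor D (1 : ℤ)).map (Sigma.ι L i) = c i ≫ z₃) := by
    choose c hc₁ hc₂ using fun i =>
      Pretriangulated.complete_distinguished_triangle_morphism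
        (Triangle.mk (f i) (g i) (h i)) (Triangle.mk (Limits.Sigma.map f) z₂ z₃)
        (hT i) hZ (Sigma.ι L i) (Sigma.ι M i) (by exact (Sigma.ι_comp_map' id f i).symm)
    exact ⟨c, hc₁, hc₂⟩
  -- shifted coproduct cofans
  have cL : IsColimit (Cofan.mk ((∐ L)⟦(1 : ℤ)⟧)
      (fun i => (shiftFunctor D (1 : ℤ)).map (Sigma.ι L i))) :=
    isColimitCofanMkObjOfIsColimit (shiftFunctor D (1 : ℤ)) _ _ (coproductIsCoproduct L)
  have cM : IsColimit (Cofan.mk ((∐ M)⟦(1 : ℤ)⟧)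
      (fun i => (shiftFunctor D (1 : ℤ)).map (Sigma.ι M i))) :=
    isColimitCofanMkObjOfIsColimit (shiftFunctor D (1 : ℤ)) _ _ (coproductIsCoproduct M)
  -- existence of descents from Z
  have hdesc : ∀ {W : D} (t : ∀ i, N i ⟶ W), ∃ d : Z ⟶ W, ∀ i, c i ≫ d = t i := by
    intro W t
    have hw0 : Limits.Sigma.map f ≫ Sigma.desc (fun i => g i ≫ t i) = 0 := by
      apply Sigma.hom_ext
      intro i
      have hfg : f i ≫ g i = 0 := comp_distTriang_mor_zero₁₂ _ (hT i)
      simp only [ι_colimMap_assoc, Discrete.functor_obj_eq_as, Discrete.natTrans_app,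
        ι_colimMap, colimit.ι_desc, Cofan.mk_pt, Cofan.mk_ι_app, comp_zero, Sigma.ι_map_assoc]
      rw [← Category.assoc, hfg, zero_comp]
    obtain ⟨u, hu⟩ : ∃ u : Z ⟶ W,
        Sigma.desc (fun i => g i ≫ t i) = z₂ ≫ u :=
      Triangle.yoneda_exact₂ _ hZ (Sigma.desc (fun i => g i ≫ t i)) hw0
    have he : ∀ i, ∃ e : (L i)⟦(1 : ℤ)⟧ ⟶ W, c i ≫ u - t i = h i ≫ e := by
      intro i
      apply Triangle.yoneda_exact₃ _ (hT i)
      show g i ≫ (c i ≫ u - t i) = 0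
      rw [Preadditive.comp_sub, ← Category.assoc, hc₁ i, Category.assoc, ← hu]
      simp
    choose e he using he
    refine ⟨u - z₃ ≫ Cofan.IsColimit.desc cL e, fun i => ?_⟩
    have hfac : (shiftFunctor D (1 : ℤ)).map (Sigma.ι L i) ≫ Cofan.IsColimit.desc cL e = e i :=
      Cofan.IsColimit.fac cL e i
    rw [Preadditive.comp_sub, ← Category.assoc, ← hc₂ i, Category.assoc, hfac, ← he i]
    abel
  -- uniqueness
  have huniq : ∀ {W : D} (w : Z ⟶ W), (∀ i, c i ≫ w = 0) → w = 0 := by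
    intro W w hw
    have hz : z₂ ≫ w = 0 := by
      apply Sigma.hom_ext
      intro i
      rw [← Category.assoc, ← hc₁ i, Category.assoc, hw i, comp_zero, comp_zero]
    obtain ⟨b, hb⟩ : ∃ b : (∐ L)⟦(1 : ℤ)⟧ ⟶ W, w = z₃ ≫ b :=
      Triangle.yoneda_exact₃ _ hZ w hz
    have hd : ∀ i, ∃ d : (M i)⟦(1 : ℤ)⟧ ⟶ W,
        (shiftFunctor D (1 : ℤ)).map (Sigma.ι L i) ≫ b =
          (shiftFunctor D (1 : ℤ)).map (f i) ≫ d := by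
      intro i
      obtain ⟨d, hd⟩ := Triangle.yoneda_exact₃ _ (rot_of_distTriang _ (hT i))
        ((shiftFunctor D (1 : ℤ)).map (Sigma.ι L i) ≫ b) (by
          show h i ≫ (shiftFunctor D (1 : ℤ)).map (Sigma.ι L i) ≫ b = 0
          rw [← Category.assoc, hc₂ i, Category.assoc, ← hb, hw i])
      refine ⟨-d, ?_⟩
      rw [show (shiftFunctor D (1 : ℤ)).map (Sigma.ι L i) ≫ b = (-(shiftFunctor D (1 : ℤ)).map (f i)) ≫ d from hd]
      exact (Preadditive.neg_comp _ _).trans (Preadditive.comp_neg _ _).symm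
    choose d hd using hd
    have hb' : b = (shiftFunctor D (1 : ℤ)).map (Limits.Sigma.map f) ≫
        Cofan.IsColimit.desc cM d := by
      apply Cofan.IsColimit.hom_ext cL
      intro i
      have h1 : (shiftFunctor D (1 : ℤ)).map (Sigma.ι M i) ≫ Cofan.IsColimit.desc cM d = d i :=
        Cofan.IsColimit.fac cM d i
      have h2 : (Sigma.ι L i : L i ⟶ ∐ L) ≫ Limits.Sigma.map f = f i ≫ Sigma.ι M i := by simp
      dsimp [Cofan.inj]
      rw [hd i, ← Category.assoc, ← Functor.map_comp, h2, Functor.map_comp, Category.assoc, h1]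
    have hz31 : z₃ ≫ (shiftFunctor D (1 : ℤ)).map (Limits.Sigma.map f) = 0 := comp_distTriang_mor_zero₃₁ _ hZ
    rw [hb, hb', ← Category.assoc, hz31, zero_comp]
  -- the colimit cofan
  have hZcolim : IsColimit (Cofan.mk Z c) := by
    refine mkCofanColimit _ (fun t => (hdesc (fun i => t.inj i)).choose)
      (fun t i => (hdesc (fun i => t.inj i)).choose_spec i) (fun t m hm => ?_)
    have hm' : ∀ j, c j ≫ m = t.inj j := hm
    rw [← sub_eq_zero]
    apply huniq
    intro i
    simp only [Preadditive.comp_sub, hm' i, (hdesc (fun i => t.inj i)).choose_spec i, sub_self]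
  have hN : HasCoproduct N := HasColimit.mk ⟨Cofan.mk Z c, hZcolim⟩
  refine ⟨hN, ?_⟩
  intro inst
  let iso : (∐ N : D) ≅ Z :=
    (colimit.isColimit (Discrete.functor N)).coconePointUniqueUpToIso hZcolim
  have hiso : ∀ i, Sigma.ι N i ≫ iso.hom = c i := fun i =>
    (colimit.isColimit (Discrete.functor N)).comp_coconePointUniqueUpToIso_hom hZcolim ⟨i⟩
  refine Pretriangulated.isomorphic_distinguished _ hZ _
    (Triangle.isoMk _ _ (Iso.refl _) (Iso.refl _) iso ?_ ?_ ?_)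
  · show Limits.Sigma.map f ≫ 𝟙 (∐ M) = 𝟙 (∐ L) ≫ Limits.Sigma.map f
    simp
  · show Limits.Sigma.map g ≫ iso.hom = 𝟙 (∐ M) ≫ z₂
    rw [Category.id_comp]
    apply Sigma.hom_ext
    intro i
    rw [← Category.assoc]
    simp only [ι_colimMap, Discrete.functor_obj_eq_as, Discrete.natTrans_app, Sigma.ι_map]
    rw [Category.assoc, hiso i, hc₁ i]
  · show (Limits.Sigma.desc fun i => h i ≫ (shiftFunctor D (1 : ℤ)).map (Limits.Sigma.ι L i)) ≫
        (shiftFunctor D (1 : ℤ)).map (𝟙 (∐ L)) = iso.hom ≫ z₃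
    rw [CategoryTheory.Functor.map_id, Category.comp_id]
    apply Sigma.hom_ext
    intro i
    rw [← Category.assoc, hiso i, ← hc₂ i]
    simp
end

section
/- Let A be an abelian category and U a full subcategory closed under quotients and extensions. Then U is contravariantly finite in A (every object admits a U-precover) if and only if the inclusion functor U → A has a right adjoint, if and only if (U, U⟂) is a torsion pair on A. -/
open CategoryTheory CategoryTheory.Limits

universe v u

/-- Every object of `A` admits a `U`-precover: a morphism `UM ⟶ M` with
`UM ∈ U` through which every morphism from an object of `U` to `M` factors. -/
def HasUPrecovers {A : Type u} [Category.{v} A] (U : A → Prop) : Prop :=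
  ∀ M : A, ∃ (UM : A) (p : UM ⟶ M), U UM ∧
    ∀ (U' : A), U U' → ∀ f : U' ⟶ M, ∃ g : U' ⟶ UM, g ≫ p = f

/-- `(U, U⟂)` is a torsion pair: every object `M` sits in a short exact
sequence `0 → L → M → N → 0` with `L ∈ U` and `N ∈ U⟂` (orthogonality
`Hom(U, U⟂) = 0` holds by definition of `U⟂`). -/
def IsTorsionPairWithPerp {A : Type u} [Category.{v} A] [Abelian A] (U : A → Prop) : Prop :=
  ∀ M : A, ∃ (L N : A) (i : L ⟶ M) (p : M ⟶ N) (w : i ≫ p = 0),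
    U L ∧ (∀ u : A, U u → ∀ h : u ⟶ N, h = 0) ∧ (ShortComplex.mk i p w).ShortExact

section Aux

variable {A : Type u} [Category.{v} A] [Abelian A] (U : A → Prop)

lemma hasUPrecovers_of_torsion (h : IsTorsionPairWithPerp U) : HasUPrecovers U := by
  intro M
  obtain ⟨L, N, i, p, w, hL, hperp, hse⟩ := h M
  refine ⟨L, i, hL, fun U' hU' f => ?_⟩
  have hf : f ≫ p = 0 := hperp U' hU' (f ≫ p)
  haveI : Mono i := hse.mono_f
  obtain ⟨g, hg⟩ := KernelFork.IsLimit.lift' hse.exact.fIsKernel f hf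
  exact ⟨g, hg⟩

lemma isLeftAdjoint_of_torsion (h : IsTorsionPairWithPerp U) :
    (ObjectProperty.ι U).IsLeftAdjoint := by
  have hterm : ∀ M : A, HasTerminal (CostructuredArrow (ObjectProperty.ι U) M) := by
    intro M
    obtain ⟨L, N, i, p, w, hL, hperp, hse⟩ := h M
    haveI : Mono i := hse.mono_f
    have hK := hse.exact.fIsKernel
    refine IsTerminal.hasTerminal
      (X := CostructuredArrow.mk
        (show (ObjectProperty.ι U).obj ⟨L, hL⟩ ⟶ M from i)) ?_
    have lifts : ∀ X : CostructuredArrow (ObjectProperty.ι U) M,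
        { g : (ObjectProperty.ι U).obj X.left ⟶ L //
          g ≫ i = (show (ObjectProperty.ι U).obj X.left ⟶ M from X.hom) } := by
      intro X
      have h0 : (show (ObjectProperty.ι U).obj X.left ⟶ M from X.hom) ≫ p = 0 :=
        hperp ((ObjectProperty.ι U).obj X.left) X.left.2 _
      exact KernelFork.IsLimit.lift' hK _ h0
    refine IsTerminal.ofUniqueHom
      (fun X => CostructuredArrow.homMk (ObjectProperty.homMk (lifts X).1) (by simpa using (lifts X).2)) ?_
    intro X m
    have hw : (ObjectProperty.ι U).map m.left ≫
        (show (ObjectProperty.ι U).obj ⟨L, hL⟩ ⟶ M from i) = X.hom :=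
      CostructuredArrow.w m
    ext
    show (ObjectProperty.ι U).map m.left = (lifts X).1
    rw [← cancel_mono i, (lifts X).2]
    exact hw
  exact isLeftAdjoint_of_costructuredArrowTerminals _

lemma hasUPrecovers_of_isLeftAdjoint (h : (ObjectProperty.ι U).IsLeftAdjoint) :
    HasUPrecovers U := by
  intro M
  let adj := Adjunction.ofIsLeftAdjoint (ObjectProperty.ι U)
  refine ⟨((ObjectProperty.ι U).rightAdjoint.obj M).obj, adj.counit.app M,
    ((ObjectProperty.ι U).rightAdjoint.obj M).2, fun U' hU' f => ?_⟩
  refine ⟨(ObjectProperty.ι U).map (adj.homEquiv ⟨U', hU'⟩ M f), ?_⟩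
  rw [← Adjunction.homEquiv_counit]
  exact (adj.homEquiv ⟨U', hU'⟩ M).symm_apply_apply
    (show (ObjectProperty.ι U).obj ⟨U', hU'⟩ ⟶ M from f)

lemma torsion_of_hasUPrecovers
    (hquot : ∀ {X Q : A} (p : X ⟶ Q), Epi p → U X → U Q)
    (hext : ∀ (S : ShortComplex A), S.ShortExact → U S.X₁ → U S.X₃ → U S.X₂)
    (h : HasUPrecovers U) : IsTorsionPairWithPerp U := by
  intro M
  obtain ⟨UM, p, hUM, hfac⟩ := h M
  let L := Limits.image p
  let i : L ⟶ M := Limits.image.ι p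
  let pN : M ⟶ cokernel i := cokernel.π i
  have w : i ≫ pN = 0 := cokernel.condition i
  have hL : U L := hquot (factorThruImage p) inferInstance hUM
  have hppN : p ≫ pN = 0 := by
    rw [← Limits.image.fac p, Category.assoc, w, comp_zero]
  refine ⟨L, cokernel i, i, pN, w, hL, ?_, ?_⟩
  · intro u hu f
    let E := pullback f pN
    have hjw : (0 : L ⟶ u) ≫ f = i ≫ pN := by simp [w]
    let j : L ⟶ E := pullback.lift 0 i hjw
    have hjfst : j ≫ pullback.fst f pN = 0 := pullback.lift_fst _ _ _
    have hjsnd : j ≫ pullback.snd f pN = i := pullback.lift_snd _ _ _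
    haveI : Mono j := by
      have : Mono (j ≫ pullback.snd f pN) := by rw [hjsnd]; infer_instance
      exact mono_of_mono j (pullback.snd f pN)
    have hjK : IsLimit (KernelFork.ofι j hjfst) := by
      refine KernelFork.IsLimit.ofι' j hjfst ?_
      intro T k hk
      have hkp : (k ≫ pullback.snd f pN) ≫ pN = 0 := by
        rw [Category.assoc, ← pullback.condition, ← Category.assoc, hk, zero_comp]
      refine ⟨Abelian.monoLift i (k ≫ pullback.snd f pN) hkp, ?_⟩
      apply pullback.hom_ext
      · rw [Category.assoc, hjfst, comp_zero, hk]
      · rw [Category.assoc, hjsnd, Abelian.monoLift_comp]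
    have hSE : (ShortComplex.mk j (pullback.fst f pN) hjfst).ShortExact :=
      { exact := ShortComplex.exact_of_f_is_kernel _ hjK
        mono_f := inferInstance
        epi_g := inferInstance }
    have hE : U E := hext _ hSE hL hu
    obtain ⟨g, hg⟩ := hfac E hE (pullback.snd f pN)
    rw [← cancel_epi (pullback.fst f pN), pullback.condition, ← hg, Category.assoc, hppN,
      comp_zero, comp_zero]
  · exact
      { exact := ShortComplex.exact_of_g_is_cokernel _ (cokernelIsCokernel i)
        mono_f := inferInstance
        epi_g := inferInstance }

end Aux

theorem stmt_14 {A : Type u} [Category.{v} A] [Abelian A] (U : A → Prop)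
    (hquot : ∀ {X Q : A} (p : X ⟶ Q), Epi p → U X → U Q)
    (hext : ∀ (S : ShortComplex A), S.ShortExact → U S.X₁ → U S.X₃ → U S.X₂) :
    (HasUPrecovers U ↔ (ObjectProperty.ι U).IsLeftAdjoint) ∧
    (HasUPrecovers U ↔ IsTorsionPairWithPerp U) := by
  constructor
  · exact ⟨fun h => isLeftAdjoint_of_torsion U (torsion_of_hasUPrecovers U hquot hext h),
      hasUPrecovers_of_isLeftAdjoint U⟩
  · exact ⟨torsion_of_hasUPrecovers U hquot hext, hasUPrecovers_of_torsion U⟩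
end

section
/- Let A be an abelian category, T a Serre class in A, and ⟨T⟩ the ideal of morphisms factoring through an object of T. For a morphism f : M → N in A, the image of f in the quotient category A/⟨T⟩ is a monomorphism if and only if ker(f) belongs to T; dually, the image of f is an epimorphism in A/⟨T⟩ if and only if coker(f) belongs to T. -/
open CategoryTheory CategoryTheory.Limits ZeroObject

/-- A morphism factors through an object of the class `T`. -/
def FactorsThruClass {A : Type*} [Category A] (T : A → Prop) {X Y : A} (f : X ⟶ Y) : Prop :=
  ∃ (Z : A) (a : X ⟶ Z) (b : Z ⟶ Y), T Z ∧ a ≫ b = f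

/-- The relation identifying two morphisms whose difference factors through an
object of `T`; the quotient by it is the stable category `A/⟨T⟩`. -/
def stableRel {A : Type*} [Category A] [Preadditive A] (T : A → Prop) : HomRel A :=
  fun {X Y} (f g : X ⟶ Y) => FactorsThruClass T (f - g)

section Aux

variable {A : Type*} [Category A] [Abelian A] {T : A → Prop}

/-- Closure of `T` under subobjects. -/
lemma T_of_mono
    (hSerre : ∀ (S : ShortComplex A), S.ShortExact → (T S.X₂ ↔ (T S.X₁ ∧ T S.X₃)))
    {X Z : A} (i : X ⟶ Z) [Mono i] (hZ : T Z) : T X := by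
  have hse : (ShortComplex.mk i (cokernel.π i) (cokernel.condition i)).ShortExact :=
    { exact := ShortComplex.exact_cokernel i }
  exact ((hSerre _ hse).1 hZ).1

/-- Closure of `T` under quotients. -/
lemma T_of_epi
    (hSerre : ∀ (S : ShortComplex A), S.ShortExact → (T S.X₂ ↔ (T S.X₁ ∧ T S.X₃)))
    {Z Y : A} (p : Z ⟶ Y) [Epi p] (hZ : T Z) : T Y := by
  have hse : (ShortComplex.mk (kernel.ι p) p (kernel.condition p)).ShortExact :=
    { exact := ShortComplex.exact_kernel p }
  exact ((hSerre _ hse).1 hZ).2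

/-- If the kernel of `h : K ⟶ Z` is in `T` and `Z ∈ T`, then `K ∈ T`. -/
lemma T_of_ker_coim
    (hSerre : ∀ (S : ShortComplex A), S.ShortExact → (T S.X₂ ↔ (T S.X₁ ∧ T S.X₃)))
    {K Z : A} (h : K ⟶ Z) (h₁ : T (kernel h)) (h₂ : T Z) : T K := by
  have hzero : kernel.ι h ≫ Abelian.coimage.π h = 0 := cokernel.condition _
  have hexact : (ShortComplex.mk (kernel.ι h) (Abelian.coimage.π h) hzero).Exact :=
    (ShortComplex.exact_iff_exact_coimage_π _).1 (ShortComplex.exact_kernel h)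
  have hse : (ShortComplex.mk (kernel.ι h) (Abelian.coimage.π h) hzero).ShortExact :=
    { exact := hexact }
  exact (hSerre _ hse).2 ⟨h₁, T_of_mono hSerre (Abelian.factorThruCoimage h) h₂⟩

/-- If the cokernel of `h : Z ⟶ C` is in `T` and `Z ∈ T`, then `C ∈ T`. -/
lemma T_of_im_coker
    (hSerre : ∀ (S : ShortComplex A), S.ShortExact → (T S.X₂ ↔ (T S.X₁ ∧ T S.X₃)))
    {Z C : A} (h : Z ⟶ C) (h₁ : T Z) (h₂ : T (cokernel h)) : T C := by
  have hzero : Abelian.image.ι h ≫ cokernel.π h = 0 :=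
    Abelian.image_ι_comp_eq_zero (cokernel.condition h)
  have hexact : (ShortComplex.mk (Abelian.image.ι h) (cokernel.π h) hzero).Exact :=
    (ShortComplex.exact_iff_exact_image_ι _).1 (ShortComplex.exact_cokernel h)
  have hse : (ShortComplex.mk (Abelian.image.ι h) (cokernel.π h) hzero).ShortExact :=
    { exact := hexact }
  exact (hSerre _ hse).2 ⟨T_of_epi hSerre (Abelian.factorThruImage h) h₁, h₂⟩

/-- Key lemma: if `u ≫ f` factors through `T` and `ker f ∈ T`, then `u` factors through `T`. -/
lemma factors_of_comp_right
    (hSerre : ∀ (S : ShortComplex A), S.ShortExact → (T S.X₂ ↔ (T S.X₁ ∧ T S.X₃)))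
    {M N : A} (f : M ⟶ N) (hK : T (kernel f))
    {X : A} (u : X ⟶ M) (hu : FactorsThruClass T (u ≫ f)) :
    FactorsThruClass T u := by
  obtain ⟨Z, a, b, hZ, hab⟩ := hu
  set g : M ⊞ Z ⟶ N := biprod.desc f (-b) with hg
  have hlu : biprod.lift u a ≫ g = 0 := by
    rw [hg, biprod.lift_desc, Preadditive.comp_neg, hab]
    simp
  set t : X ⟶ kernel g := kernel.lift g (biprod.lift u a) hlu with ht
  set h : kernel g ⟶ Z := kernel.ι g ≫ biprod.snd with hh
  -- `kernel h` embeds into `kernel f`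
  set m : kernel h ⟶ M := kernel.ι h ≫ kernel.ι g ≫ biprod.fst with hm
  have e1 : (kernel.ι h ≫ kernel.ι g) ≫ g = 0 := by
    rw [Category.assoc, kernel.condition, comp_zero]
  have e2 : kernel.ι h ≫ h = 0 := kernel.condition h
  have hmf : m ≫ f = 0 := by
    have : m ≫ f = (kernel.ι h ≫ kernel.ι g) ≫ g + (kernel.ι h ≫ h) ≫ b := by
      simp only [hm, hh, hg, biprod.desc_eq, Preadditive.comp_add, Preadditive.add_comp,
        Preadditive.comp_neg, Preadditive.neg_comp, Category.assoc]
      abel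
    rw [this, e1, e2, zero_comp, add_zero]
  have hmono : Mono m := by
    apply Preadditive.mono_of_cancel_zero
    intro P x hx
    haveI : Mono (kernel.ι h ≫ kernel.ι g) := mono_comp _ _
    have hy : x ≫ (kernel.ι h ≫ kernel.ι g) = 0 := by
      apply biprod.hom_ext
      · simpa [hm] using hx
      · simpa [hh] using x ≫= e2
    exact zero_of_comp_mono _ hy
  haveI : Mono (kernel.lift f m hmf) := by
    have hfac : kernel.lift f m hmf ≫ kernel.ι f = m := kernel.lift_ι f m hmf
    exact mono_of_mono_fac hfac
  have hTkerh : T (kernel h) := T_of_mono hSerre (kernel.lift f m hmf) hK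
  have hTkerg : T (kernel g) := T_of_ker_coim hSerre h hTkerh hZ
  refine ⟨kernel g, t, kernel.ι g ≫ biprod.fst, hTkerg, ?_⟩
  rw [← Category.assoc, ht, kernel.lift_ι, biprod.lift_fst]

/-- Key lemma: if `f ≫ u` factors through `T` and `coker f ∈ T`, then `u` factors through `T`. -/
lemma factors_of_comp_left
    (hSerre : ∀ (S : ShortComplex A), S.ShortExact → (T S.X₂ ↔ (T S.X₁ ∧ T S.X₃)))
    {M N : A} (f : M ⟶ N) (hC : T (cokernel f))
    {X : A} (u : N ⟶ X) (hu : FactorsThruClass T (f ≫ u)) :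
    FactorsThruClass T u := by
  obtain ⟨Z, a, b, hZ, hab⟩ := hu
  set g : M ⟶ N ⊞ Z := biprod.lift f (-a) with hg
  have hlu : g ≫ biprod.desc u b = 0 := by
    rw [hg, biprod.lift_desc, Preadditive.neg_comp, hab]
    simp
  set w : cokernel g ⟶ X := cokernel.desc g (biprod.desc u b) hlu with hw
  set h : Z ⟶ cokernel g := biprod.inr ≫ cokernel.π g with hh
  -- `cokernel h` is a quotient of `cokernel f`
  set n : N ⟶ cokernel h := biprod.inl ≫ cokernel.π g ≫ cokernel.π h with hn
  have e1 : g ≫ cokernel.π g ≫ cokernel.π h = 0 := by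
    rw [← Category.assoc, cokernel.condition, zero_comp]
  have e2 : h ≫ cokernel.π h = 0 := cokernel.condition h
  have hfn : f ≫ n = 0 := by
    have : f ≫ n = g ≫ cokernel.π g ≫ cokernel.π h + a ≫ h ≫ cokernel.π h := by
      simp only [hn, hh, hg, biprod.lift_eq, Preadditive.comp_add, Preadditive.add_comp,
        Preadditive.comp_neg, Preadditive.neg_comp, Category.assoc]
      abel
    rw [this, e1, e2, comp_zero, add_zero]
  have hepi : Epi n := by
    apply Preadditive.epi_of_cancel_zero
    intro P x hx
    haveI : Epi (cokernel.π g ≫ cokernel.π h) := epi_comp _ _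
    have hy : (cokernel.π g ≫ cokernel.π h) ≫ x = 0 := by
      apply biprod.hom_ext'
      · simpa [hn] using hx
      · simp only [comp_zero, Category.assoc]
        rw [← Category.assoc, ← hh, ← Category.assoc, e2, zero_comp]
    exact zero_of_epi_comp _ hy
  haveI : Epi (cokernel.desc f n hfn) := by
    have hfac : cokernel.π f ≫ cokernel.desc f n hfn = n := cokernel.π_desc f n hfn
    exact epi_of_epi_fac hfac
  have hTcokh : T (cokernel h) := T_of_epi hSerre (cokernel.desc f n hfn) hC
  have hTcokg : T (cokernel g) := T_of_im_coker hSerre h hZ hTcokh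
  refine ⟨cokernel g, biprod.inl ≫ cokernel.π g, w, hTcokg, ?_⟩
  rw [Category.assoc, hw, cokernel.π_desc, biprod.inl_desc]

/-- `stableRel T` is a congruence. -/
lemma stableRel_congruence
    (hzero : ∀ Z : A, IsZero Z → T Z)
    (hSerre : ∀ (S : ShortComplex A), S.ShortExact → (T S.X₂ ↔ (T S.X₁ ∧ T S.X₃))) :
    Congruence (stableRel T) where
  equivalence := by
    intro X Y
    constructor
    · intro f
      exact ⟨0, 0, 0, hzero 0 (isZero_zero A), by simp⟩
    · rintro f g ⟨Z, a, b, hZ, hab⟩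
      exact ⟨Z, -a, b, hZ, by rw [Preadditive.neg_comp, hab, neg_sub]⟩
    · rintro f g k ⟨Z₁, a, b, hZ₁, hab⟩ ⟨Z₂, c, d, hZ₂, hcd⟩
      have hT : T (Z₁ ⊞ Z₂) := by
        have hse := (ShortComplex.Splitting.ofHasBinaryBiproduct Z₁ Z₂).shortExact
        exact (hSerre _ hse).2 ⟨hZ₁, hZ₂⟩
      exact ⟨Z₁ ⊞ Z₂, biprod.lift a c, biprod.desc b d, hT, by
        rw [biprod.lift_desc, hab, hcd, sub_add_sub_cancel]⟩
  comp_left := by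
    rintro X Y Z f g g' ⟨W, a, b, hW, hab⟩
    exact ⟨W, f ≫ a, b, hW, by rw [Category.assoc, hab, Preadditive.comp_sub]⟩
  comp_right := by
    rintro X Y Z f f' g ⟨W, a, b, hW, hab⟩
    exact ⟨W, a, b ≫ g, hW, by rw [← Category.assoc, hab, Preadditive.sub_comp]⟩

end Aux

theorem stmt_15 {A : Type*} [Category A] [Abelian A] (T : A → Prop)
    (hzero : ∀ Z : A, IsZero Z → T Z)
    (hSerre : ∀ (S : ShortComplex A), S.ShortExact → (T S.X₂ ↔ (T S.X₁ ∧ T S.X₃)))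
    {M N : A} (f : M ⟶ N) :
    (Mono ((Quotient.functor (stableRel T)).map f) ↔ T (kernel f)) ∧
    (Epi ((Quotient.functor (stableRel T)).map f) ↔ T (cokernel f)) := by
  haveI : Congruence (stableRel T) := stableRel_congruence hzero hSerre
  constructor
  · constructor
    · intro hmono
      have h0 : (Quotient.functor (stableRel T)).map (kernel.ι f) =
          (Quotient.functor (stableRel T)).map (0 : kernel f ⟶ M) := by
        rw [← cancel_mono ((Quotient.functor (stableRel T)).map f), ← Functor.map_comp,
          ← Functor.map_comp, kernel.condition, zero_comp]
      obtain ⟨Z, a, b, hZ, hab⟩ := (Quotient.functor_map_eq_iff (stableRel T) _ _).1 h0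
      rw [sub_zero] at hab
      haveI : Mono a := by
        apply Preadditive.mono_of_cancel_zero
        intro P x hx
        have : x ≫ kernel.ι f = 0 := by
          rw [← hab, ← Category.assoc, hx, zero_comp]
        exact zero_of_comp_mono (kernel.ι f) this
      exact T_of_mono hSerre a hZ
    · intro hK
      constructor
      intro W g h hgh
      obtain ⟨W⟩ := W
      obtain ⟨g₀, rfl⟩ := (Quotient.functor (stableRel T)).map_surjective g
      obtain ⟨h₀, rfl⟩ := (Quotient.functor (stableRel T)).map_surjective h
      rw [← Functor.map_comp, ← Functor.map_comp,
        Quotient.functor_map_eq_iff (stableRel T)] at hgh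
      rw [Quotient.functor_map_eq_iff (stableRel T)]
      have hfac : FactorsThruClass T ((g₀ - h₀) ≫ f) := by
        rw [Preadditive.sub_comp]
        exact hgh
      exact factors_of_comp_right hSerre f hK _ hfac
  · constructor
    · intro hepi
      have h0 : (Quotient.functor (stableRel T)).map (cokernel.π f) =
          (Quotient.functor (stableRel T)).map (0 : N ⟶ cokernel f) := by
        rw [← cancel_epi ((Quotient.functor (stableRel T)).map f), ← Functor.map_comp,
          ← Functor.map_comp, cokernel.condition, comp_zero]
      obtain ⟨Z, a, b, hZ, hab⟩ := (Quotient.functor_map_eq_iff (stableRel T) _ _).1 h0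
      rw [sub_zero] at hab
      haveI : Epi b := by
        apply Preadditive.epi_of_cancel_zero
        intro P x hx
        have : cokernel.π f ≫ x = 0 := by
          rw [← hab, Category.assoc, hx, comp_zero]
        exact zero_of_epi_comp (cokernel.π f) this
      exact T_of_epi hSerre b hZ
    · intro hC
      constructor
      intro W g h hgh
      obtain ⟨W⟩ := W
      obtain ⟨g₀, rfl⟩ := (Quotient.functor (stableRel T)).map_surjective g
      obtain ⟨h₀, rfl⟩ := (Quotient.functor (stableRel T)).map_surjective h
      rw [← Functor.map_comp, ← Functor.map_comp,
        Quotient.functor_map_eq_iff (stableRel T)] at hgh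
      rw [Quotient.functor_map_eq_iff (stableRel T)]
      have hfac : FactorsThruClass T (f ≫ (g₀ - h₀)) := by
        rw [Preadditive.comp_sub]
        exact hgh
      exact factors_of_comp_left hSerre f hC _ hfac
end

section
/- Let A be an abelian category, T a full subcategory of projective objects closed under finite direct sums and direct summands, and A̅ = A/⟨T⟩ the stable category. If f : M → N is an epimorphism in A, then the image of f in A̅ is a monomorphism if and only if the kernel morphism ker(f) → M factors through an object of T. -/
open CategoryTheory CategoryTheory.Limits ZeroObject

lemma FactorsThruClass.add {A : Type*} [Category A] [Abelian A] {T : A → Prop}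
    (hsum : ∀ X Y : A, T X → T Y → T (X ⊞ Y)) {X Y : A} {f g : X ⟶ Y}
    (hf : FactorsThruClass T f) (hg : FactorsThruClass T g) :
    FactorsThruClass T (f + g) := by
  obtain ⟨Z, a, b, hZ, hab⟩ := hf
  obtain ⟨W, c, d, hW, hcd⟩ := hg
  exact ⟨Z ⊞ W, biprod.lift a c, biprod.desc b d, hsum _ _ hZ hW, by simp [hab, hcd]⟩

lemma stableRel.congruence {A : Type*} [Category A] [Abelian A] {T : A → Prop}
    (hzero : ∀ Z : A, IsZero Z → T Z)
    (hsum : ∀ X Y : A, T X → T Y → T (X ⊞ Y)) :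
    Congruence (stableRel T) where
  equivalence := by
    intro X Y
    constructor
    · intro f
      exact ⟨0, 0, 0, hzero _ (isZero_zero A), by simp⟩
    · rintro f g ⟨Z, a, b, hZ, hab⟩
      exact ⟨Z, -a, b, hZ, by simp [hab]⟩
    · intro f g h hfg hgh
      have := FactorsThruClass.add hsum hfg hgh
      simpa [stableRel] using this
  comp_left := by
    rintro X Y Z f g g' ⟨W, a, b, hW, hab⟩
    exact ⟨W, f ≫ a, b, hW, by rw [Category.assoc, hab, Preadditive.comp_sub]⟩
  comp_right := by
    rintro X Y Z f f' g ⟨W, a, b, hW, hab⟩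
    exact ⟨W, a, b ≫ g, hW, by rw [← Category.assoc, hab, Preadditive.sub_comp]⟩

theorem stmt_16 {A : Type*} [Category A] [Abelian A] (T : A → Prop)
    (hproj : ∀ X : A, T X → Projective X)
    (hzero : ∀ Z : A, IsZero Z → T Z)
    (hsum : ∀ X Y : A, T X → T Y → T (X ⊞ Y))
    (hsummand : ∀ X Z : A, T Z → (∃ (i : X ⟶ Z) (r : Z ⟶ X), i ≫ r = 𝟙 X) → T X)
    {M N : A} (f : M ⟶ N) (hf : Epi f) :
    Mono ((Quotient.functor (stableRel T)).map f) ↔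
      FactorsThruClass T (kernel.ι f) := by
  haveI : Congruence (stableRel T) := stableRel.congruence hzero hsum
  constructor
  · intro hmono
    have h0 : (Quotient.functor (stableRel T)).map (kernel.ι f) ≫
        (Quotient.functor (stableRel T)).map f =
        (Quotient.functor (stableRel T)).map (0 : kernel f ⟶ M) ≫
        (Quotient.functor (stableRel T)).map f := by
      rw [← Functor.map_comp, ← Functor.map_comp, kernel.condition, Limits.zero_comp]
    have := hmono.right_cancellation _ _ h0
    rw [Quotient.functor_map_eq_iff] at this
    simpa [stableRel] using this
  · rintro ⟨Z, a, b, hZ, hab⟩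
    constructor
    intro X g h hgh
    obtain ⟨g', rfl⟩ := (Quotient.full_functor (stableRel T)).map_surjective g
    obtain ⟨h', rfl⟩ := (Quotient.full_functor (stableRel T)).map_surjective h
    rw [← Functor.map_comp, ← Functor.map_comp, Quotient.functor_map_eq_iff] at hgh
    rw [Quotient.functor_map_eq_iff]
    -- hgh : (g' - h') ≫ f factors through T
    obtain ⟨W, u, v, hW, huv⟩ := hgh
    rw [← Preadditive.sub_comp] at huv
    -- lift v through f using projectivity of W
    haveI : Projective W := hproj _ hW
    obtain ⟨w, hw⟩ := Projective.factors v f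
    -- (g' - h' - u ≫ w) ≫ f = 0
    have hker : (g' - h' - u ≫ w) ≫ f = 0 := by
      rw [Preadditive.sub_comp, ← huv, Category.assoc, hw, sub_self]
    show FactorsThruClass T (g' - h')
    set k := kernel.lift f _ hker with hkdef
    have : g' - h' = k ≫ kernel.ι f + u ≫ w := by
      rw [hkdef, kernel.lift_ι]; abel
    rw [this]
    exact FactorsThruClass.add hsum
      ⟨Z, k ≫ a, b, hZ, by rw [Category.assoc, hab]⟩
      ⟨W, u, w, hW, rfl⟩
end

section
/- Let A be an abelian category, T a full subcategory of projective objects closed under finite direct sums and direct summands, and f : M → N an epimorphism in A. Then the image of f in the stable category A̅ = A/⟨T⟩ is an isomorphism if and only if f is a retraction in A with ker(f) ∈ T. -/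
open CategoryTheory CategoryTheory.Limits
open ZeroObject

theorem stmt_17 {A : Type*} [Category A] [Abelian A] (T : A → Prop)
    (hproj : ∀ X : A, T X → Projective X)
    (hzero : ∀ Z : A, IsZero Z → T Z)
    (hsum : ∀ X Y : A, T X → T Y → T (X ⊞ Y))
    (hsummand : ∀ X Z : A, T Z → (∃ (i : X ⟶ Z) (r : Z ⟶ X), i ≫ r = 𝟙 X) → T X)
    {M N : A} (f : M ⟶ N) (hf : Epi f) :
    IsIso ((Quotient.functor (stableRel T)).map f) ↔
      ((∃ s : N ⟶ M, s ≫ f = 𝟙 N) ∧ T (kernel f)) := by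
  haveI : Congruence (stableRel T) :=
    { equivalence := by
        intro X Y
        constructor
        · intro g
          exact ⟨0, 0, 0, hzero _ (isZero_zero A), by simp⟩
        · rintro g g' ⟨Z, a, b, hZ, hab⟩
          exact ⟨Z, -a, b, hZ, by rw [Preadditive.neg_comp, hab]; abel⟩
        · rintro g g' g'' ⟨Z, a, b, hZ, hab⟩ ⟨W, c, d, hW, hcd⟩
          refine ⟨Z ⊞ W, biprod.lift a c, biprod.desc b d, hsum _ _ hZ hW, ?_⟩
          rw [biprod.lift_desc, hab, hcd]; abel
      comp_left := by
        rintro X Y Z g g' g'' ⟨W, a, b, hW, hab⟩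
        exact ⟨W, g ≫ a, b, hW, by
          rw [Category.assoc, hab, Preadditive.comp_sub]⟩
      comp_right := by
        rintro X Y Z g g' g'' ⟨W, a, b, hW, hab⟩
        exact ⟨W, a, b ≫ g'', hW, by
          rw [← Category.assoc, hab, Preadditive.sub_comp]⟩ }
  constructor
  · intro h
    obtain ⟨g, hg⟩ := (Quotient.functor (stableRel T)).map_surjective
      (inv ((Quotient.functor (stableRel T)).map f))
    have h1 : stableRel T (f ≫ g) (𝟙 M) := by
      rw [← Quotient.functor_map_eq_iff (stableRel T)]
      simp [hg]
    have h2 : stableRel T (g ≫ f) (𝟙 N) := by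
      rw [← Quotient.functor_map_eq_iff (stableRel T)]
      simp [hg]
    obtain ⟨Z, a, b, hZ, hab⟩ := h2
    haveI := hproj Z hZ
    -- lift b through the epi f
    set c := Projective.factorThru b f with hc
    have hcf : c ≫ f = b := Projective.factorThru_comp b f
    have hs : (g - a ≫ c) ≫ f = 𝟙 N := by
      have : a ≫ b = g ≫ f - 𝟙 N := hab
      rw [Preadditive.sub_comp, Category.assoc, hcf, this]
      abel
    refine ⟨⟨g - a ≫ c, hs⟩, ?_⟩
    -- kernel f is a direct summand of Z' from h1
    obtain ⟨Z', a', b', hZ', hab'⟩ := h1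
    set s := g - a ≫ c with hsdef
    have hq0 : (𝟙 M - f ≫ s) ≫ f = 0 := by
      rw [Preadditive.sub_comp, Category.id_comp, Category.assoc, hs, Category.comp_id, sub_self]
    set q : M ⟶ kernel f := kernel.lift f (𝟙 M - f ≫ s) hq0 with hqdef
    have hqι : q ≫ kernel.ι f = 𝟙 M - f ≫ s := kernel.lift_ι _ _ _
    have hιab : kernel.ι f ≫ (a' ≫ b') = -(kernel.ι f) := by
      rw [hab', Preadditive.comp_sub, ← Category.assoc, kernel.condition,
        zero_comp, Category.comp_id, zero_sub]
    have hιq : kernel.ι f ≫ q = 𝟙 (kernel f) := by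
      rw [← cancel_mono (kernel.ι f), Category.assoc, hqι, Category.id_comp,
        Preadditive.comp_sub, ← Category.assoc, kernel.condition, zero_comp,
        sub_zero, Category.comp_id]
    refine hsummand _ Z' hZ' ⟨-(kernel.ι f ≫ a'), b' ≫ q, ?_⟩
    have h3 : kernel.ι f ≫ a' ≫ b' ≫ q = -(kernel.ι f ≫ q) := by
      have := hιab =≫ q
      simpa using this
    simp only [Preadditive.neg_comp, Category.assoc, h3, hιq, neg_neg]
  · rintro ⟨⟨s, hs⟩, hT⟩
    have hq0 : (𝟙 M - f ≫ s) ≫ f = 0 := by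
      rw [Preadditive.sub_comp, Category.id_comp, Category.assoc, hs, Category.comp_id, sub_self]
    refine ⟨(Quotient.functor (stableRel T)).map s, ?_, ?_⟩
    · rw [← CategoryTheory.Functor.map_comp,
        ← CategoryTheory.Functor.map_id (Quotient.functor (stableRel T)) M,
        Quotient.functor_map_eq_iff (stableRel T)]
      exact ⟨kernel f, -(kernel.lift f (𝟙 M - f ≫ s) hq0), kernel.ι f, hT, by
        rw [Preadditive.neg_comp, kernel.lift_ι]; abel⟩
    · rw [← CategoryTheory.Functor.map_comp, hs, CategoryTheory.Functor.map_id]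
end

section
/- Let A be a ring and I an idempotent two-sided ideal of A (I² = I). Let Y be the full subcategory of Mod A consisting of modules M with MI = 0, and X the full subcategory of modules M with MI = M. Then X = ⟂Y (the modules M with Hom_A(M, Y) = 0 for all Y ∈ Y), X coincides with the class of modules generated by I (quotients of coproducts of copies of I), and Y coincides with the class of modules generated by A/I. -/
universe u

/-- The submodule `I·M` of a module `M`, generated by all products `a • m` with
`a ∈ I`. -/
def idealSmulTop {A : Type u} [Ring A] (I : Ideal A)
    (M : Type u) [AddCommGroup M] [Module A M] : Submodule A M :=
  Submodule.span A {x : M | ∃ a ∈ I, ∃ m : M, x = a • m}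

section Aux

variable {A : Type u} [Ring A] (I : Ideal A)

lemma mem_idealSmulTop {M : Type u} [AddCommGroup M] [Module A M]
    {a : A} (ha : a ∈ I) (m : M) : a • m ∈ idealSmulTop I M :=
  Submodule.subset_span ⟨a, ha, m, rfl⟩

lemma idealSmulTop_eq_bot_iff {M : Type u} [AddCommGroup M] [Module A M] :
    idealSmulTop I M = ⊥ ↔ ∀ a ∈ I, ∀ m : M, a • m = 0 := by
  constructor
  · intro h a ha m
    have := mem_idealSmulTop I ha m
    rw [h, Submodule.mem_bot] at this
    exact this
  · intro h
    rw [idealSmulTop, Submodule.span_eq_bot]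
    rintro x ⟨a, ha, m, rfl⟩
    exact h a ha m

lemma map_idealSmulTop_le {M N : Type u} [AddCommGroup M] [Module A M]
    [AddCommGroup N] [Module A N] (f : M →ₗ[A] N) :
    (idealSmulTop I M).map f ≤ idealSmulTop I N := by
  rw [idealSmulTop, Submodule.map_span, Submodule.span_le]
  rintro _ ⟨x, ⟨a, ha, m, rfl⟩, rfl⟩
  rw [map_smul]
  exact mem_idealSmulTop I ha (f m)

lemma idealSmulTop_top_of_surj {M N : Type u} [AddCommGroup M] [Module A M]
    [AddCommGroup N] [Module A N] (f : M →ₗ[A] N) (hf : Function.Surjective f)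
    (h : idealSmulTop I M = ⊤) : idealSmulTop I N = ⊤ := by
  rw [eq_top_iff]
  intro n _
  obtain ⟨m, rfl⟩ := hf n
  exact map_idealSmulTop_le I f ⟨m, by rw [h]; trivial, rfl⟩

lemma idealSmulTop_self_top
    (hidem : ∀ a ∈ I, a ∈ Submodule.span A {x : A | ∃ b ∈ I, ∃ c ∈ I, x = b * c}) :
    idealSmulTop I ↥I = ⊤ := by
  rw [eq_top_iff]
  rintro ⟨x, hx⟩ _
  have h1 : Submodule.span A {x : A | ∃ b ∈ I, ∃ c ∈ I, x = b * c} ≤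
      (idealSmulTop I ↥I).map I.subtype := by
    rw [Submodule.span_le]
    rintro _ ⟨b, hb, c, hc, rfl⟩
    exact ⟨b • ⟨c, hc⟩, mem_idealSmulTop I hb _, by simp [smul_eq_mul]⟩
  obtain ⟨y, hy, hyx⟩ := h1 (hidem x hx)
  have hxy : y = ⟨x, hx⟩ := Subtype.ext hyx
  rwa [hxy] at hy

lemma idealSmulTop_finsupp_top {S P : Type u} [AddCommGroup P] [Module A P]
    (h : idealSmulTop I P = ⊤) : idealSmulTop I (S →₀ P) = ⊤ := by
  rw [eq_top_iff]
  intro x _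
  induction x using Finsupp.induction_linear with
  | zero => exact Submodule.zero_mem _
  | add f g hf hg => exact Submodule.add_mem _ (hf trivial) (hg trivial)
  | single s p =>
    have heq : Finsupp.single s p = Finsupp.lsingle (R := A) s p := rfl
    rw [heq]
    exact map_idealSmulTop_le I (Finsupp.lsingle s) ⟨p, by rw [h]; trivial, rfl⟩

lemma idealSmulTop_quotient_bot {M : Type u} [AddCommGroup M] [Module A M] :
    idealSmulTop I (M ⧸ idealSmulTop I M) = ⊥ := by
  rw [idealSmulTop_eq_bot_iff]
  intro a ha q
  obtain ⟨m, rfl⟩ := Submodule.Quotient.mk_surjective _ q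
  rw [← Submodule.Quotient.mk_smul, Submodule.Quotient.mk_eq_zero]
  exact mem_idealSmulTop I ha m

end Aux

theorem stmt_18 {A : Type u} [Ring A] (I : Ideal A)
    (htwosided : ∀ a ∈ I, ∀ r : A, a * r ∈ I)
    (hidem : ∀ a ∈ I, a ∈ Submodule.span A {x : A | ∃ b ∈ I, ∃ c ∈ I, x = b * c}) :
    (∀ (M : Type u) [AddCommGroup M] [Module A M],
        idealSmulTop I M = ⊤ ↔
          ∀ (N : Type u) [AddCommGroup N] [Module A N],
            idealSmulTop I N = ⊥ → ∀ f : M →ₗ[A] N, f = 0) ∧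
    (∀ (M : Type u) [AddCommGroup M] [Module A M],
        idealSmulTop I M = ⊤ ↔
          ∃ (S : Type u) (f : (S →₀ ↥I) →ₗ[A] M), Function.Surjective f) ∧
    (∀ (M : Type u) [AddCommGroup M] [Module A M],
        idealSmulTop I M = ⊥ ↔
          ∃ (S : Type u) (f : (S →₀ (A ⧸ I)) →ₗ[A] M), Function.Surjective f) := by
  refine ⟨fun M _ _ => ⟨?_, ?_⟩, fun M _ _ => ⟨?_, ?_⟩, fun M _ _ => ⟨?_, ?_⟩⟩
  · -- IM = ⊤ → all maps to Y vanish
    intro hM N _ _ hN f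
    ext m
    have hm : m ∈ idealSmulTop I M := by rw [hM]; trivial
    have : f m ∈ idealSmulTop I N := map_idealSmulTop_le I f ⟨m, hm, rfl⟩
    rw [hN, Submodule.mem_bot] at this
    simpa using this
  · -- converse: use the quotient M ⧸ IM
    intro H
    have := H (M ⧸ idealSmulTop I M) (idealSmulTop_quotient_bot I)
      (idealSmulTop I M).mkQ
    have hker := congrArg LinearMap.ker this
    rw [Submodule.ker_mkQ, LinearMap.ker_zero] at hker
    exact hker
  · -- IM = ⊤ → M generated by copies of I
    intro hM
    refine ⟨M, Finsupp.lsum ℕ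
      (fun m => (LinearMap.toSpanSingleton A M m).comp I.subtype), ?_⟩
    rw [← LinearMap.range_eq_top, eq_top_iff]
    intro m _
    have hm : m ∈ idealSmulTop I M := by rw [hM]; trivial
    refine Submodule.span_le.2 ?_ hm
    rintro _ ⟨a, ha, m', rfl⟩
    exact ⟨Finsupp.single m' ⟨a, ha⟩, by simp⟩
  · -- converse
    rintro ⟨S, f, hf⟩
    exact idealSmulTop_top_of_surj I f hf
      (idealSmulTop_finsupp_top I (idealSmulTop_self_top I hidem))
  · -- IM = ⊥ → M generated by copies of A/I
    intro hM
    have hle : ∀ m : M, I ≤ LinearMap.ker (LinearMap.toSpanSingleton A M m) := by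
      intro m a ha
      rw [LinearMap.mem_ker, LinearMap.toSpanSingleton_apply]
      exact (idealSmulTop_eq_bot_iff I).1 hM a ha m
    refine ⟨M, Finsupp.lsum ℕ
      (fun m => Submodule.liftQ I (LinearMap.toSpanSingleton A M m) (hle m)), ?_⟩
    intro m
    refine ⟨Finsupp.single m (Submodule.Quotient.mk 1), ?_⟩
    simp [Submodule.liftQ_apply]
  · -- converse
    rintro ⟨S, f, hf⟩
    have hAI : idealSmulTop I (A ⧸ I) = ⊥ := by
      rw [idealSmulTop_eq_bot_iff]
      intro a ha q
      obtain ⟨r, rfl⟩ := Submodule.Quotient.mk_surjective _ q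
      rw [← Submodule.Quotient.mk_smul, Submodule.Quotient.mk_eq_zero]
      exact htwosided a ha r
    have hdom : idealSmulTop I (S →₀ (A ⧸ I)) = ⊥ := by
      rw [idealSmulTop_eq_bot_iff]
      intro a ha x
      ext s
      simp [(idealSmulTop_eq_bot_iff I).1 hAI a ha (x s)]
    rw [idealSmulTop_eq_bot_iff]
    intro a ha m
    obtain ⟨x, rfl⟩ := hf m
    rw [← map_smul, (idealSmulTop_eq_bot_iff I).1 hdom a ha x, map_zero]
end

section
/- Let A be a ring, (X, Y, Z) a TTF triple on Mod A (i.e., (X, Y) and (Y, Z) are torsion pairs), with associated idempotent ideal I = τ_X(A). If the torsion pair (Y, Z) is split (every module decomposes as its Y-torsion part direct sum a Z-module), then the torsion pair (X, Y) is hereditary, i.e., X is closed under submodules. -/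
open CategoryTheory

universe u

/-- A torsion pair `(X, Y)` on the category of `A`-modules: both classes are
closed under isomorphism, `Hom(X, Y) = 0`, and every module `M` has a submodule
`t` with `t ∈ X` and `M/t ∈ Y`. -/
def IsModuleTorsionPair {A : Type u} [Ring A]
    (X Y : ModuleCat.{u} A → Prop) : Prop :=
  (∀ {M N : ModuleCat.{u} A}, (M ≅ N) → X M → X N) ∧
  (∀ {M N : ModuleCat.{u} A}, (M ≅ N) → Y M → Y N) ∧
  (∀ {M N : ModuleCat.{u} A}, X M → Y N → ∀ f : M ⟶ N, f = 0) ∧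
  (∀ M : ModuleCat.{u} A, ∃ t : Submodule A M,
    X (ModuleCat.of A t) ∧ Y (ModuleCat.of A (M ⧸ t)))

theorem stmt_19 {A : Type u} [Ring A] (X Y Z : ModuleCat.{u} A → Prop)
    (hXY : IsModuleTorsionPair X Y) (hYZ : IsModuleTorsionPair Y Z)
    (hsplit : ∀ M : ModuleCat.{u} A, ∃ t : Submodule A M,
      Y (ModuleCat.of A t) ∧ Z (ModuleCat.of A (M ⧸ t)) ∧
        ∃ r : M →ₗ[A] t, ∀ x : t, r x = x) :
    ∀ (M : ModuleCat.{u} A), X M → ∀ N : Submodule A M, X (ModuleCat.of A N) := by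
  intro M hM N
  -- torsion submodule of N for the pair (X, Y)
  obtain ⟨t, htX, htY⟩ := hXY.2.2.2 (ModuleCat.of A N)
  -- push t forward to a submodule of M
  set t' : Submodule A M := t.map N.subtype with ht'
  -- the quotient and the splitting for (Y, Z)
  obtain ⟨s, hsY, hsZ, r, hr⟩ := hsplit (ModuleCat.of A (M ⧸ t'))
  -- g : N → M/t' ; its kernel is t and its range is the image of N
  set g : (ModuleCat.of A N) →ₗ[A] (M ⧸ t') := t'.mkQ.comp N.subtype with hg
  have hker : LinearMap.ker g = t := by
    ext n
    simp only [hg, LinearMap.mem_ker, LinearMap.comp_apply, Submodule.mkQ_apply,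
      Submodule.Quotient.mk_eq_zero, ht', Submodule.mem_map]
    constructor
    · rintro ⟨m, hm, hmn⟩
      have : m = n := Subtype.ext hmn
      exact this ▸ hm
    · intro hn; exact ⟨n, hn, rfl⟩
  -- N/t is isomorphic to the range of g
  have hYrange : Y (ModuleCat.of A (LinearMap.range g)) := by
    refine hXY.2.1 (M := ModuleCat.of A ((ModuleCat.of A N) ⧸ t)) ?_ htY
    have e : ((ModuleCat.of A N) ⧸ t) ≃ₗ[A] (LinearMap.range g) :=
      (Submodule.quotEquivOfEq t (LinearMap.ker g) hker.symm).trans g.quotKerEquivRange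
    exact e.toModuleIso
  -- range g ≤ s : the composite range g → (M/t')/s is Y → Z hence zero
  have hle : LinearMap.range g ≤ s := by
    intro x hx
    have hzero := hYZ.2.2.1 hYrange hsZ
      (show (ModuleCat.of A (LinearMap.range g)) ⟶ (ModuleCat.of A ((M ⧸ t') ⧸ s)) from
        ModuleCat.ofHom (s.mkQ.comp (LinearMap.range g).subtype))
    have h0 : s.mkQ x = 0 := congrFun (congrArg (fun f => ⇑(ModuleCat.Hom.hom f)) hzero) ⟨x, hx⟩
    rwa [← Submodule.Quotient.mk_eq_zero]
  -- the composite M → M/t' → s is X → Y hence zero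
  have hzero : ∀ m : M, r (t'.mkQ m) = 0 := by
    have h := hXY.2.2.1 hM hsY
      (show M ⟶ (ModuleCat.of A s) from ModuleCat.ofHom (r.comp t'.mkQ))
    intro m
    have := congrFun (congrArg (fun f => ⇑(ModuleCat.Hom.hom f)) h) m
    simpa using this
  -- hence every n ∈ N lies in t', so t = ⊤
  have htop : t = ⊤ := by
    rw [eq_top_iff]
    intro n _
    have hn : g n ∈ s := hle ⟨n, rfl⟩
    have h1 : r (g n) = ⟨g n, hn⟩ := hr ⟨g n, hn⟩
    have h2 : r (g n) = 0 := hzero (N.subtype n)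
    have : g n = 0 := by
      have := h1.symm.trans h2
      exact congrArg Subtype.val this
    rw [← hker]
    exact this
  -- conclude: N ≅ t ∈ X
  refine hXY.1 (M := ModuleCat.of A t) ?_ htX
  exact (LinearEquiv.ofTop t htop).toModuleIso
end
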